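/- For every k ≥ 1, let φ : FreeAlgebra ℚ (Fin k) → FreeAlgebra ℚ (Fin k) be the unique algebra homomorphism sending the generator X_i to −X_{k+1−i} for each 1 ≤ i ≤ k. Then φ(μ_k(X_1,…,X_k)) = −μ_k(X_1,…,X_k); equivalently, μ_k(X_1,…,X_k) = −μ_k(−X_k,…,−X_1). -/

import Mathlib

open scoped Classical BigOperators

noncomputable section

/-- Number of descents of a permutation of `Fin k`:
`des σ = #{1 ≤ i ≤ k−1 : σ(i) > σ(i+1)}`. -/
def descents {k : ℕ} (σ : Equiv.Perm (Fin k)) : ℕ :=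
  (Finset.univ.filter fun i : Fin k =>
    ∃ h : (i : ℕ) + 1 < k, σ ⟨(i : ℕ) + 1, h⟩ < σ i).card

/-- Number of ascents of a permutation of `Fin k`: `asc σ = (k−1) − des σ`. -/
def ascents {k : ℕ} (σ : Equiv.Perm (Fin k)) : ℕ := (k - 1) - descents σ

/-- The `k`-th Magnus commutator in the free associative algebra
(Mielnik–Plebański formula):
`μ_k(X_1,…,X_k) = Σ_{σ ∈ S_k} (−1)^{des σ} (asc σ)!(des σ)!/k! · X_{σ(1)} ⋯ X_{σ(k)}`. -/
def magnus (R : Type*) [Field R] (k : ℕ) : FreeAlgebra R (Fin k) :=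
  ∑ σ : Equiv.Perm (Fin k),
    ((-1 : R) ^ descents σ * ((ascents σ).factorial : R) * ((descents σ).factorial : R) /
        (k.factorial : R)) •
      (List.ofFn fun i : Fin k => FreeAlgebra.ι R (σ i)).prod

/-- `μ_k(X_1,…,X_k) = −μ_k(−X_k,…,−X_1)`: the algebra map `X_i ↦ −X_{k+1−i}` sends
the Magnus commutator to its negative.  Stated for `k+1 ≥ 1` variables. -/
lemma card_S (k : ℕ) :
    (Finset.filter (fun i : Fin (k+1) => (i:ℕ) + 1 < k + 1) Finset.univ).card = k := by
  have h : (Finset.filter (fun i : Fin (k+1) => (i:ℕ) + 1 < k + 1) Finset.univ)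
      = Finset.univ.map ⟨Fin.castSucc, Fin.castSucc_injective k⟩ := by
    ext i
    simp [Nat.add_lt_add_iff_right, eq_comm]
    constructor
    · intro h; exact ⟨⟨i, h⟩, Fin.ext rfl⟩
    · rintro ⟨j, rfl⟩; exact j.isLt
  rw [h]; simp

lemma descents_le {k : ℕ} (σ : Equiv.Perm (Fin (k+1))) : descents σ ≤ k := by
  rw [descents]
  refine le_trans (Finset.card_le_card ?_) (le_of_eq (card_S k))
  intro i hi
  simp only [Finset.mem_filter, Finset.mem_univ, true_and] at hi ⊢
  exact hi.choose

lemma descents_rev_mul {k : ℕ} (σ : Equiv.Perm (Fin (k+1))) :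
    descents ((Fin.revPerm : Equiv.Perm (Fin (k+1))) * σ) = k - descents σ := by
  have key : (Finset.univ.filter fun i : Fin (k+1) =>
      ∃ h : (i : ℕ) + 1 < k+1, ((Fin.revPerm : Equiv.Perm (Fin (k+1))) * σ) ⟨(i : ℕ) + 1, h⟩
        < ((Fin.revPerm : Equiv.Perm (Fin (k+1))) * σ) i)
      = (Finset.filter (fun i : Fin (k+1) => (i:ℕ) + 1 < k + 1) Finset.univ) \
        (Finset.univ.filter fun i : Fin (k+1) =>
          ∃ h : (i : ℕ) + 1 < k+1, σ ⟨(i : ℕ) + 1, h⟩ < σ i) := by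
    ext i
    simp only [Finset.mem_filter, Finset.mem_univ, true_and, Finset.mem_sdiff,
      Equiv.Perm.mul_apply, Fin.revPerm_apply, Fin.rev_lt_rev]
    constructor
    · rintro ⟨h, hlt⟩
      refine ⟨h, ?_⟩
      rintro ⟨h', hlt'⟩
      exact absurd hlt' (not_lt.mpr hlt.le)
    · rintro ⟨h, hn⟩
      refine ⟨h, ?_⟩
      rcases lt_trichotomy (σ i) (σ ⟨(i:ℕ)+1, h⟩) with hl | he | hg
      · exact hl
      · exfalso
        have := σ.injective he
        have : (i : ℕ) = (i:ℕ) + 1 := congrArg Fin.val this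
        omega
      · exact absurd ⟨h, hg⟩ hn
  rw [descents, key, Finset.card_sdiff_of_subset, card_S, descents]
  intro i hi
  simp only [Finset.mem_filter, Finset.mem_univ, true_and] at hi ⊢
  exact hi.choose

lemma neg_list_prod {R : Type*} [Ring R] (l : List R) :
    (l.map Neg.neg).prod = (-1 : R) ^ l.length * l.prod := by
  induction l with
  | nil => simp
  | cons a l ih =>
    simp only [List.map_cons, List.prod_cons, List.length_cons, ih, pow_succ]
    have hc : Commute ((-1 : R) ^ l.length) a := (Commute.neg_one_left a).pow_left l.length
    rw [mul_neg_one, neg_mul, neg_mul, neg_inj, ← mul_assoc, ← hc.eq, mul_assoc]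

theorem magnus_reverse (k : ℕ) :
    FreeAlgebra.lift ℚ (fun i : Fin (k + 1) => -FreeAlgebra.ι ℚ i.rev)
        (magnus ℚ (k + 1)) =
      -magnus ℚ (k + 1) := by
  set A := FreeAlgebra ℚ (Fin (k+1))
  set φ := FreeAlgebra.lift ℚ (fun i : Fin (k + 1) => -FreeAlgebra.ι ℚ i.rev)
  set c : Equiv.Perm (Fin (k+1)) → ℚ := fun σ =>
    (-1 : ℚ) ^ descents σ * ((ascents σ).factorial : ℚ) * ((descents σ).factorial : ℚ) /
      ((k+1).factorial : ℚ) with hc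
  set P : Equiv.Perm (Fin (k+1)) → A := fun σ =>
    (List.ofFn fun i : Fin (k+1) => FreeAlgebra.ι ℚ (σ i)).prod with hP
  have step : ∀ σ : Equiv.Perm (Fin (k+1)),
      φ (c σ • P σ) = (-(c ((Fin.revPerm : Equiv.Perm (Fin (k+1))) * σ))) •
        P ((Fin.revPerm : Equiv.Perm (Fin (k+1))) * σ) := by
    intro σ
    have hφP : φ (P σ) = ((-1 : ℚ) ^ (k+1)) •
        P ((Fin.revPerm : Equiv.Perm (Fin (k+1))) * σ) := by
      rw [hP]
      simp only [map_list_prod, List.map_ofFn]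
      have : (List.ofFn (⇑φ ∘ fun i : Fin (k+1) => FreeAlgebra.ι ℚ (σ i)))
          = (List.ofFn fun i : Fin (k+1) =>
              FreeAlgebra.ι ℚ (((Fin.revPerm : Equiv.Perm (Fin (k+1))) * σ) i)).map Neg.neg := by
        rw [List.map_ofFn]
        congr 1
        funext i
        simp [φ, Equiv.Perm.mul_apply]
      rw [this, neg_list_prod]
      simp only [List.length_ofFn]
      rw [show ((-1 : A) ^ (k+1)) = algebraMap ℚ A ((-1 : ℚ) ^ (k+1)) by simp,
        ← Algebra.smul_def]
    rw [map_smul, hφP, smul_smul]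
    congr 1
    -- coefficient identity
    set d := descents σ with hd
    have hdk : d ≤ k := descents_le σ
    have hdes : descents ((Fin.revPerm : Equiv.Perm (Fin (k+1))) * σ) = k - d :=
      descents_rev_mul σ
    have hascσ : ascents σ = k - d := by simp [ascents, hd]
    have hascρ : ascents ((Fin.revPerm : Equiv.Perm (Fin (k+1))) * σ) = d := by
      simp [ascents, hdes]; omega
    rw [hc]
    simp only [hdes, hascσ, hascρ, ← hd]
    have hsign : ((-1:ℚ)) ^ (d + (k + 1)) = -(-1:ℚ) ^ (k - d) := by
      rw [neg_one_pow_eq_pow_mod_two, show (-(-1:ℚ)^(k-d)) = (-1)^((k-d)+1) by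
        rw [pow_succ, mul_neg_one], neg_one_pow_eq_pow_mod_two (n := (k-d)+1)]
      congr 1
      omega
    field_simp
    have hsign' : ((-1:ℚ)) ^ (k - d) = -(-1:ℚ) ^ (d + (k + 1)) := by
      rw [hsign, neg_neg]
    rw [hsign', pow_add]
    ring
  rw [magnus, map_sum]
  refine (Finset.sum_congr rfl (fun σ _ => step σ)).trans ?_
  rw [← Finset.sum_neg_distrib]
  exact Fintype.sum_equiv (Equiv.mulLeft (Fin.revPerm : Equiv.Perm (Fin (k+1)))) _ _
    fun σ => neg_smul _ _


end
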